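/- Let n be an odd positive integer. For λ, x : Fin n → ℝ, define E_λ(x) = ∑ exp(2πi ∑_i ε i · λ(σ⁻¹ i) · x i), the sum over all pairs (σ, ε) with σ a permutation of Fin n, ε : Fin n → ℝ with ε i ∈ {1, −1} for all i, and sign(σ) · ∏_i ε i = +1; and define E'_λ(x) by the same formula with the condition sign(σ) · ∏_i ε i = −1. Then for all λ and x, conj(E_λ(x)) = E'_λ(x); that is, for odd n the two E-orbit functions E_λ and E_{r_α λ} of type C_n are complex conjugates of each other. -/

import Mathlib

/-- The `E`-orbit function of type `Cₙ`: the sum of `exp(2πi ∑ᵢ ε i · λ(σ⁻¹ i) · x i)`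
over all pairs `(σ, ε)` with `σ` a permutation, `ε i ∈ {1, −1}`, and
`sign σ · ∏ᵢ ε i = 1`. -/
noncomputable def ECn (n : ℕ) (lam x : Fin n → ℝ) : ℂ :=
  ∑ σ : Equiv.Perm (Fin n),
    ∑ ε ∈ Fintype.piFinset (fun _ : Fin n => ({1, -1} : Finset ℝ)),
      if ((Equiv.Perm.sign σ : ℤ) : ℝ) * ∏ i, ε i = 1 then
        Complex.exp (2 * (Real.pi : ℂ) * Complex.I *
          ((∑ i, ε i * lam (σ⁻¹ i) * x i : ℝ) : ℂ))
      else 0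

/-- The companion `E`-orbit function of type `Cₙ` (attached to `r_α λ`): the same sum
over the pairs `(σ, ε)` with `sign σ · ∏ᵢ ε i = −1`. -/
noncomputable def ECn' (n : ℕ) (lam x : Fin n → ℝ) : ℂ :=
  ∑ σ : Equiv.Perm (Fin n),
    ∑ ε ∈ Fintype.piFinset (fun _ : Fin n => ({1, -1} : Finset ℝ)),
      if ((Equiv.Perm.sign σ : ℤ) : ℝ) * ∏ i, ε i = -1 then
        Complex.exp (2 * (Real.pi : ℂ) * Complex.I *
          ((∑ i, ε i * lam (σ⁻¹ i) * x i : ℝ) : ℂ))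
      else 0

/-- For odd `n`, the two `E`-orbit functions `E_λ` and `E_{r_α λ}` of type `Cₙ` are
complex conjugates of each other. -/
theorem ECn_conj_of_odd (n : ℕ) (hn : 0 < n) (hodd : Odd n) (lam x : Fin n → ℝ) :
    (starRingEnd ℂ) (ECn n lam x) = ECn' n lam x := by
  unfold ECn ECn'
  rw [map_sum]
  refine Finset.sum_congr rfl fun σ _ => ?_
  rw [map_sum]
  refine Finset.sum_nbij' (fun ε => -ε) (fun ε => -ε) ?_ ?_ ?_ ?_ ?_
  · intro ε hε
    simp only [Fintype.mem_piFinset, Finset.mem_insert, Finset.mem_singleton] at hε ⊢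
    intro i
    rcases hε i with h | h <;> simp [h]
  · intro ε hε
    simp only [Fintype.mem_piFinset, Finset.mem_insert, Finset.mem_singleton] at hε ⊢
    intro i
    rcases hε i with h | h <;> simp [h]
  · intro ε _; funext i; simp
  · intro ε _; funext i; simp
  · intro ε hε
    have hprod : (∏ i, (-ε) i) = -∏ i, ε i := by
      simp only [Pi.neg_apply]
      simp_rw [neg_eq_neg_one_mul (ε _)]
      rw [Finset.prod_mul_distrib, Finset.prod_const, Finset.card_univ, Fintype.card_fin,
        hodd.neg_one_pow, neg_one_mul]
    have hsum : (∑ i, (-ε) i * lam (σ⁻¹ i) * x i) = -∑ i, ε i * lam (σ⁻¹ i) * x i := by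
      simp [Finset.sum_neg_distrib, neg_mul]
    by_cases h : ((Equiv.Perm.sign σ : ℤ) : ℝ) * ∏ i, ε i = 1
    · have h' : ((Equiv.Perm.sign σ : ℤ) : ℝ) * ∏ i, (-ε) i = -1 := by
        rw [hprod, mul_neg, h]
      rw [if_pos h, if_pos h', hsum]
      rw [← Complex.exp_conj]
      congr 1
      simp [map_mul, Complex.conj_I, Complex.conj_ofReal]
      left
      exact Complex.conj_ofNat 2
    · have h' : ¬ ((Equiv.Perm.sign σ : ℤ) : ℝ) * ∏ i, (-ε) i = -1 := by
        rw [hprod, mul_neg]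
        intro hc
        exact h (by linarith [neg_eq_iff_eq_neg.mp hc])
      rw [if_neg h, if_neg h', map_zero]
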